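/- Let X be a topological space and let τ be a topology on C(X,$) such that every τ-open subset of C(X,$) is openly isotone and, for every x ∈ X, the family 𝒪(x) := {U ∈ C(X,$) : x ∈ U} is τ-open. Then for every A ∈ C(X,$), the τ-closure of the singleton {A} equals {O ∈ C(X,$) : O ⊆ A}. -/

import Mathlib

open TopologicalSpace Topology

/-- A family of open sets is *openly isotone* if it is upward closed among open sets. -/
def OpenlyIsotone {X : Type*} [TopologicalSpace X] (A : Set (Opens X)) : Prop :=
  ∀ ⦃U V : Opens X⦄, U ∈ A → U ≤ V → V ∈ A

/-- If `τ` is a topology on the hyperspace `C(X,$)` of open subsets of `X` whose open sets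
are all openly isotone and for which every family `𝒪(x)` is open (i.e. `p(X,$) ≤ τ ≤ [X,$]`),
then the `τ`-closure of a singleton `{A}` is the set of open sets included in `A`. -/
theorem closure_singleton_eq {X : Type*} [TopologicalSpace X]
    (τ : TopologicalSpace (Opens X))
    (hiso : ∀ S : Set (Opens X), IsOpen[τ] S → OpenlyIsotone S)
    (hp : ∀ x : X, IsOpen[τ] {U : Opens X | x ∈ U}) :
    ∀ A : Opens X, @closure _ τ {A} = {O : Opens X | O ≤ A} := by
  intro A
  ext O
  letI := τ
  rw [mem_closure_iff]
  constructor
  · intro h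
    by_contra hOA
    obtain ⟨x, hxO, hxA⟩ := Set.not_subset.mp (fun hsub => hOA (show O ≤ A from SetLike.coe_subset_coe.mp hsub))
    obtain ⟨B, hB⟩ := h _ (hp x) hxO
    simp only [Set.mem_inter_iff, Set.mem_singleton_iff, Set.mem_setOf_eq] at hB
    exact hxA (hB.2 ▸ hB.1)
  · intro hOA S hS hOS
    exact ⟨A, hiso S hS hOS hOA, rfl⟩
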